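/- Let X be a separable Banach lattice. Then a sequence (x_n) in X order converges to x ∈ X if and only if it σ-order converges to x, i.e., there exists a decreasing sequence (z_m) in X with infimum 0 such that for every m, |x_n − x| ≤ z_m for all but finitely many n. -/

import Mathlib

open Filter

universe u

/-- `(x n)` order converges to `x₀`: there is a decreasing net `(z μ)`, indexed by a
(nonempty, upward directed) preordered set, with infimum `0`, such that for every `μ`,
`|x n − x₀| ≤ z μ` for all but finitely many `n`. -/
def OrderConvergesTo {X : Type u} [Lattice X] [AddCommGroup X] (x : ℕ → X) (x₀ : X) : Prop :=
  ∃ (ι : Type u) (le : ι → ι → Prop), Nonempty ι ∧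
    (∀ a, le a a) ∧ (∀ a b c, le a b → le b c → le a c) ∧
    (∀ a b, ∃ c, le a c ∧ le b c) ∧
    ∃ z : ι → X, (∀ a b, le a b → z b ≤ z a) ∧ IsGLB (Set.range z) 0 ∧
      ∀ μ, ∀ᶠ n in atTop, |x n - x₀| ≤ z μ

/-- `(x n)` σ-order converges to `x₀`: there is a decreasing sequence `(z m)` with
infimum `0` such that for every `m`, `|x n − x₀| ≤ z m` for all but finitely many `n`. -/
def SigmaOrderConvergesTo {X : Type u} [Lattice X] [AddCommGroup X] (x : ℕ → X) (x₀ : X) :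
    Prop :=
  ∃ z : ℕ → X, Antitone z ∧ IsGLB (Set.range z) 0 ∧
    ∀ m, ∀ᶠ n in atTop, |x n - x₀| ≤ z m

/-- In a separable Banach lattice, a sequence order converges to `x₀`
iff it σ-order converges to `x₀`. -/
theorem orderConvergesTo_iff_sigmaOrderConvergesTo {X : Type u}
    [NormedAddCommGroup X] [Lattice X] [HasSolidNorm X] [IsOrderedAddMonoid X] [NormedSpace ℝ X] [CompleteSpace X]
    [TopologicalSpace.SeparableSpace X] (x : ℕ → X) (x₀ : X) :
    OrderConvergesTo x x₀ ↔ SigmaOrderConvergesTo x x₀ := by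
  constructor
  · rintro ⟨ι, le, ⟨a₀⟩, hrefl, htrans, hdir, z, hanti, hglb, hev⟩
    haveI : SecondCountableTopology X :=
      UniformSpace.secondCountable_of_separable X
    have hopen : ∀ a : ι, IsOpen ({y : X | y ≤ z a}ᶜ) := fun a =>
      (isClosed_le continuous_id continuous_const).isOpen_compl
    obtain ⟨T, hTc, hTeq⟩ :=
      TopologicalSpace.isOpen_iUnion_countable (fun a => {y : X | y ≤ z a}ᶜ) hopen
    have key : ∀ b : X, (∀ a ∈ T, b ≤ z a) → ∀ a : ι, b ≤ z a := by
      intro b hb a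
      by_contra h
      have hmem : b ∈ ⋃ i : ι, {y : X | y ≤ z i}ᶜ := Set.mem_iUnion.2 ⟨a, h⟩
      rw [← hTeq] at hmem
      obtain ⟨i, hiT, hi⟩ := Set.mem_iUnion₂.1 hmem
      exact hi (hb i hiT)
    obtain ⟨f, hf⟩ := (hTc.insert a₀).exists_eq_range (Set.insert_nonempty _ _)
    choose g hg1 hg2 using hdir
    let μ : ℕ → ι := fun m => Nat.rec (f 0) (fun m p => g p (f (m + 1))) m
    have hμstep : ∀ m, le (μ m) (μ (m + 1)) := fun m => hg1 _ _
    have hμf : ∀ m, le (f m) (μ m) := by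
      intro m
      cases m with
      | zero => exact hrefl _
      | succ m => exact hg2 _ _
    refine ⟨fun m => z (μ m), ?_, ?_, fun m => hev (μ m)⟩
    · exact antitone_nat_of_succ_le fun m => hanti _ _ (hμstep m)
    · constructor
      · rintro y ⟨m, rfl⟩
        exact hglb.1 ⟨μ m, rfl⟩
      · intro b hb
        refine hglb.2 ?_
        rintro y ⟨a, rfl⟩
        refine key b ?_ a
        intro a' ha'
        have : a' ∈ Set.range f := by rw [← hf]; exact Set.mem_insert_of_mem _ ha'
        obtain ⟨m, rfl⟩ := this
        exact le_trans (hb ⟨m, rfl⟩) (hanti _ _ (hμf m))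
  · rintro ⟨z, hz, hglb, hev⟩
    refine ⟨ULift.{u} ℕ, fun a b => a.down ≤ b.down, ⟨⟨0⟩⟩, fun a => le_refl _,
      fun a b c hab hbc => le_trans hab hbc,
      fun a b => ⟨⟨max a.down b.down⟩, le_max_left _ _, le_max_right _ _⟩,
      fun a => z a.down, fun a b hab => hz hab, ?_, fun μ => hev μ.down⟩
    have hr : Set.range (fun a : ULift.{u} ℕ => z a.down) = Set.range z := by
      ext y
      constructor
      · rintro ⟨a, rfl⟩; exact ⟨a.down, rfl⟩
      · rintro ⟨n, rfl⟩; exact ⟨⟨n⟩, rfl⟩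
    rw [hr]
    exact hglb
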